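/- Let r ≥ 1 and let a₁, …, a_r ≥ 1 be integers, d = a₁ + ⋯ + a_r, and let p = (p₁, …, p_r) ∈ 𝔽^r be a nonzero vector. Then the number of r-tuples (s₁, …, s_r) of polynomials in 𝔽[X] such that deg sᵢ ≤ aᵢ for all i, the coefficient of X^{aᵢ} in sᵢ equals pᵢ for all i, and every common divisor of s₁, …, s_r is a unit, equals q^d − q^{d−r+1}. In particular, this count depends only on d and r, and not on the individual degrees aᵢ nor on the choice of nonzero vector p. -/

import Mathlib

open Polynomial Finset
open scoped Classical

set_option linter.unusedSectionVars false
set_option maxHeartbeats 1000000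

namespace Stmt1

variable {F : Type*} [Field F] [Fintype F]

noncomputable def phi (n : ℕ) (c : F) (v : Fin n → F) : F[X] :=
  C c * X ^ n + ∑ i : Fin n, C (v i) * X ^ (i : ℕ)

noncomputable def B (n : ℕ) (c : F) : Finset F[X] :=
  Finset.univ.image (phi n c)

lemma coeff_phi (n : ℕ) (c : F) (v : Fin n → F) (j : ℕ) :
    (phi n c v).coeff j = if h : j < n then v ⟨j, h⟩ else if j = n then c else 0 := by
  rw [phi, coeff_add, finset_sum_coeff]
  simp only [coeff_C_mul, coeff_X_pow]
  by_cases h : j < n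
  · rw [dif_pos h]
    rw [Finset.sum_eq_single (⟨j, h⟩ : Fin n)]
    · simp [Nat.ne_of_lt h]
    · intro b _ hb
      have : j ≠ (b : ℕ) := fun hq => hb (Fin.ext hq.symm)
      simp [this]
    · simp
  · rw [dif_neg h]
    have hz : ∀ b : Fin n, b ∈ (Finset.univ : Finset (Fin n)) →
        v b * (if j = (b:ℕ) then (1:F) else 0) = 0 := by
      intro b _
      have : j ≠ (b:ℕ) := by
        intro hq; exact h (hq ▸ b.isLt)
      simp [this]
    rw [Finset.sum_eq_zero hz, add_zero]
    split_ifs <;> ring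

lemma phi_injective (n : ℕ) (c : F) : Function.Injective (phi n c) := by
  intro v w hvw
  funext i
  have := congrArg (fun f => Polynomial.coeff f (i : ℕ)) hvw
  simpa [coeff_phi, i.isLt] using this

lemma mem_B {n : ℕ} {c : F} {f : F[X]} :
    f ∈ B n c ↔ f.degree ≤ (n : WithBot ℕ) ∧ f.coeff n = c := by
  constructor
  · rintro hf
    obtain ⟨v, _, rfl⟩ := Finset.mem_image.1 hf
    constructor
    · rw [degree_le_iff_coeff_zero]
      intro m hm
      have h1 : ¬ (m < n) := fun h => absurd (Nat.cast_lt.2 h) (not_lt.2 hm.le)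
      have h2 : m ≠ n := fun h => by rw [h] at hm; exact lt_irrefl _ hm
      rw [coeff_phi, dif_neg h1, if_neg h2]
    · rw [coeff_phi, dif_neg (lt_irrefl n), if_pos rfl]
  · rintro ⟨hdeg, hc⟩
    rw [B, Finset.mem_image]
    refine ⟨fun i => f.coeff i, Finset.mem_univ _, ?_⟩
    ext j
    rw [coeff_phi]
    by_cases h : j < n
    · rw [dif_pos h]
    · rw [dif_neg h]
      by_cases h2 : j = n
      · rw [if_pos h2, h2, hc]
      · rw [if_neg h2]
        have : f.degree < (j : WithBot ℕ) := lt_of_le_of_lt hdeg (by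
          exact_mod_cast lt_of_le_of_ne (not_lt.1 h) (Ne.symm h2))
        exact (coeff_eq_zero_of_degree_lt this).symm

lemma card_B (n : ℕ) (c : F) : (B n c).card = Fintype.card F ^ n := by
  rw [B, Finset.card_image_of_injective _ (phi_injective n c), Finset.card_univ]
  simp

lemma mem_B_one {e : ℕ} {f : F[X]} :
    f ∈ B e (1 : F) ↔ f.Monic ∧ f.natDegree = e := by
  rw [mem_B]
  constructor
  · rintro ⟨hdeg, hc⟩
    have hdege : f.degree = (e : WithBot ℕ) := by
      refine le_antisymm hdeg ?_
      exact le_degree_of_ne_zero (by rw [hc]; exact one_ne_zero)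
    have hnat : f.natDegree = e := natDegree_eq_of_degree_eq_some hdege
    exact ⟨by rwa [Monic, leadingCoeff, hnat], hnat⟩
  · rintro ⟨hm, rfl⟩
    exact ⟨degree_le_natDegree, hm⟩

lemma coeff_monic_mul {h t : F[X]} (hm : h.Monic) {k : ℕ}
    (ht : t.degree ≤ (k : WithBot ℕ)) :
    (h * t).coeff (h.natDegree + k) = t.coeff k := by
  rw [coeff_mul]
  rw [Finset.sum_eq_single (h.natDegree, k)]
  · rw [hm.coeff_natDegree, one_mul]
  · rintro ⟨i, j⟩ hij hne
    rw [Finset.HasAntidiagonal.mem_antidiagonal] at hij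
    rcases lt_trichotomy i h.natDegree with hi | hi | hi
    · have hj : k < j := by omega
      have : t.degree < (j : WithBot ℕ) := lt_of_le_of_lt ht (Nat.cast_lt.2 hj)
      rw [coeff_eq_zero_of_degree_lt this, mul_zero]
    · have : j = k := by omega
      exact absurd (Prod.ext hi this) hne
    · rw [coeff_eq_zero_of_natDegree_lt hi, zero_mul]
  · intro hnot
    simp [Finset.HasAntidiagonal.mem_antidiagonal] at hnot

variable (F) in
noncomputable def Box {r : ℕ} (a : Fin r → ℕ) (p : Fin r → F) : Finset (Fin r → F[X]) :=
  Fintype.piFinset fun i => B (a i) (p i)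

lemma mem_Box {r : ℕ} {a : Fin r → ℕ} {p : Fin r → F} {s : Fin r → F[X]} :
    s ∈ Box F a p ↔ ∀ i, (s i).degree ≤ ((a i : ℕ) : WithBot ℕ) ∧ (s i).coeff (a i) = p i := by
  rw [Box, Fintype.mem_piFinset]
  exact forall_congr' fun i => mem_B

lemma card_Box {r : ℕ} (a : Fin r → ℕ) (p : Fin r → F) :
    (Box F a p).card = Fintype.card F ^ (∑ i, a i) := by
  rw [Box, Fintype.card_piFinset]
  simp_rw [card_B]
  rw [Finset.prod_pow_eq_pow_sum]

variable (F) in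
noncomputable def Cop {r : ℕ} (a : Fin r → ℕ) (p : Fin r → F) : Finset (Fin r → F[X]) :=
  (Box F a p).filter fun s => ∀ g : F[X], (∀ i, g ∣ s i) → IsUnit g

section Fiber

variable {r : ℕ} {a : Fin r → ℕ} {p : Fin r → F} {h : F[X]}

lemma mul_constraints (hm : h.Monic) (He : ∀ k, a k < h.natDegree → p k = 0)
    {t : F[X]} {k : Fin r} (hdeg : t.degree ≤ ((a k - h.natDegree : ℕ) : WithBot ℕ))
    (hc : t.coeff (a k - h.natDegree) = p k) :
    (h * t).degree ≤ ((a k : ℕ) : WithBot ℕ) ∧ (h * t).coeff (a k) = p k := by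
  by_cases hk : h.natDegree ≤ a k
  · have hak : h.natDegree + (a k - h.natDegree) = a k := by omega
    constructor
    · refine le_trans (degree_mul_le _ _) ?_
      have hdh : h.degree = (h.natDegree : WithBot ℕ) := degree_eq_natDegree hm.ne_zero
      rw [hdh]
      calc (h.natDegree : WithBot ℕ) + t.degree
          ≤ (h.natDegree : WithBot ℕ) + ((a k - h.natDegree : ℕ) : WithBot ℕ) :=
            add_le_add_right hdeg _
        _ = ((a k : ℕ) : WithBot ℕ) := by rw [← Nat.cast_add, hak]
    · rw [← hak, coeff_monic_mul hm hdeg, hc]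
  · have hp0 : p k = 0 := He k (by omega)
    have h1 : a k - h.natDegree = 0 := by omega
    have ht0 : t = 0 := by
      have h2 : t = C (t.coeff 0) := eq_C_of_degree_le_zero (by
        rw [h1] at hdeg; exact_mod_cast hdeg)
      rw [h1] at hc
      rw [h2, hc, hp0, map_zero]
    rw [ht0, mul_zero]
    simp [hp0]

lemma fiber_card (hm : h.Monic) (He : ∀ k, a k < h.natDegree → p k = 0) :
    ((Box F a p).filter fun s => Finset.univ.gcd s = h).card
      = (Cop F (fun i => a i - h.natDegree) p).card := by
  have h0 : h ≠ 0 := hm.ne_zero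
  refine Finset.card_bij' (fun s _ => fun k => s k / h) (fun t _ => fun k => h * t k)
    ?_ ?_ ?_ ?_
  · -- forward: s in fiber → s/h in Cop
    intro s hs
    rw [Finset.mem_filter] at hs
    obtain ⟨hbox, hgcd⟩ := hs
    rw [mem_Box] at hbox
    have hdvd : ∀ k, h ∣ s k := fun k => hgcd ▸ Finset.gcd_dvd (Finset.mem_univ k)
    have hsk : ∀ k, h * (s k / h) = s k := fun k =>
      EuclideanDomain.mul_div_cancel' h0 (hdvd k)
    have hkey : ∀ k, (s k / h).degree ≤ ((a k - h.natDegree : ℕ) : WithBot ℕ) ∧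
        (s k / h).coeff (a k - h.natDegree) = p k := by
      intro k
      by_cases hq0 : s k / h = 0
      · have hs0 : s k = 0 := by rw [← hsk k, hq0, mul_zero]
        have hp0 : p k = 0 := by rw [← (hbox k).2, hs0, coeff_zero]
        simp [hq0, hp0]
      · have hnd : (s k).natDegree = h.natDegree + (s k / h).natDegree := by
          conv_lhs => rw [← hsk k]
          exact natDegree_mul h0 hq0
        have hnds : (s k).natDegree ≤ a k :=
          natDegree_le_iff_degree_le.2 (hbox k).1
        have hdq : (s k / h).degree ≤ ((a k - h.natDegree : ℕ) : WithBot ℕ) :=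
          le_trans degree_le_natDegree (Nat.cast_le.2 (by omega))
        refine ⟨hdq, ?_⟩
        have hak : h.natDegree + (a k - h.natDegree) = a k := by omega
        have hcm := coeff_monic_mul hm hdq
        rw [hsk k] at hcm
        rw [← hcm, hak, (hbox k).2]
    rw [Cop, Finset.mem_filter, mem_Box]
    refine ⟨hkey, ?_⟩
    intro g hg
    have hdvd2 : h * g ∣ Finset.univ.gcd s := by
      refine Finset.dvd_gcd fun b _ => ?_
      rw [← hsk b]
      exact mul_dvd_mul_left h (hg b)
    rw [hgcd] at hdvd2
    have : g ∣ 1 := (mul_dvd_mul_iff_left h0).1 (by rwa [mul_one])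
    exact isUnit_of_dvd_one this
  · -- backward: t in Cop → h*t in fiber
    intro t ht
    rw [Cop, Finset.mem_filter, mem_Box] at ht
    obtain ⟨hbox, hcop⟩ := ht
    rw [Finset.mem_filter, mem_Box]
    refine ⟨fun k => mul_constraints hm He (hbox k).1 (hbox k).2, ?_⟩
    have hgt : Finset.univ.gcd t = 1 := by
      have hunit : IsUnit (Finset.univ.gcd t) :=
        hcop _ fun i => Finset.gcd_dvd (Finset.mem_univ i)
      rw [← Finset.normalize_gcd, normalize_eq_one.2 hunit]
    rw [Finset.gcd_mul_left, hgt, hm.normalize_eq_self, mul_one]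
  · intro s hs
    rw [Finset.mem_filter] at hs
    have hdvd : ∀ k, h ∣ s k := fun k => hs.2 ▸ Finset.gcd_dvd (Finset.mem_univ k)
    funext k
    exact EuclideanDomain.mul_div_cancel' h0 (hdvd k)
  · intro t _
    funext k
    exact mul_div_cancel_left₀ _ h0

end Fiber

end Stmt1

namespace Stmt1b
end Stmt1b

namespace Stmt1

section Rec

variable {F : Type*} [Field F] [Fintype F] {r : ℕ} {a : Fin r → ℕ} {p : Fin r → F}

variable (F) in
noncomputable def H (m : ℕ) : Finset F[X] :=
  (Finset.range (m+1)).biUnion fun e => B e (1 : F)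

lemma mem_H {m : ℕ} {f : F[X]} : f ∈ H F m ↔ f.Monic ∧ f.natDegree ≤ m := by
  rw [H, Finset.mem_biUnion]
  constructor
  · rintro ⟨e, he, hf⟩
    rw [mem_B_one] at hf
    exact ⟨hf.1, hf.2 ▸ Nat.lt_succ_iff.1 (Finset.mem_range.1 he)⟩
  · rintro ⟨hmon, hle⟩
    exact ⟨f.natDegree, Finset.mem_range.2 (Nat.lt_succ_of_le hle),
      mem_B_one.2 ⟨hmon, rfl⟩⟩

lemma rec_identity (m : ℕ)
    (hm1 : ∀ i, p i ≠ 0 → m ≤ a i) (hm2 : ∃ i, p i ≠ 0 ∧ a i = m) :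
    Fintype.card F ^ (∑ i, a i) =
      ∑ e ∈ Finset.range (m+1), Fintype.card F ^ e * (Cop F (fun i => a i - e) p).card := by
  obtain ⟨i₁, hpi₁, hai₁⟩ := hm2
  rw [← card_Box a p]
  have hmaps : ∀ s ∈ Box F a p, Finset.univ.gcd s ∈ H F m := by
    intro s hs
    rw [mem_Box] at hs
    have hsi : s i₁ ≠ 0 := fun hz => hpi₁ (by rw [← (hs i₁).2, hz, coeff_zero])
    have hg0 : Finset.univ.gcd s ≠ 0 := by
      intro hz
      exact hsi (Finset.gcd_eq_zero_iff.1 hz i₁ (Finset.mem_univ _))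
    refine mem_H.2 ⟨?_, ?_⟩
    · rw [← Finset.normalize_gcd]
      exact monic_normalize hg0
    · calc (Finset.univ.gcd s).natDegree ≤ (s i₁).natDegree :=
            natDegree_le_of_dvd (Finset.gcd_dvd (Finset.mem_univ _)) hsi
        _ ≤ a i₁ := natDegree_le_iff_degree_le.2 (hs i₁).1
        _ = m := hai₁
  rw [Finset.card_eq_sum_card_fiberwise hmaps]
  rw [H, Finset.sum_biUnion]
  · refine Finset.sum_congr rfl fun e he => ?_
    rw [Finset.mem_range, Nat.lt_succ_iff] at he
    have hsum : ∀ h ∈ B e (1 : F),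
        ((Box F a p).filter fun s => Finset.univ.gcd s = h).card
          = (Cop F (fun i => a i - e) p).card := by
      intro h hh
      rw [mem_B_one] at hh
      have He : ∀ k, a k < h.natDegree → p k = 0 := by
        intro k hk
        by_contra hpk
        have := hm1 k hpk
        omega
      rw [fiber_card hh.1 He, hh.2]
    rw [Finset.sum_congr rfl hsum, Finset.sum_const, card_B, smul_eq_mul]
  · intro e he e' he' hne
    simp only [Function.onFun]
    rw [Finset.disjoint_left]
    intro f hf hf'
    rw [mem_B_one] at hf hf'
    exact hne (hf.2 ▸ hf'.2)

end Rec

end Stmt1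

namespace Stmt1

lemma tele2 (A : ℕ → ℤ) (m : ℕ) (hm : 1 ≤ m) :
    ∑ e ∈ Finset.Ico 1 m, (A e - A (e+1)) = A 1 - A m := by
  induction m with
  | zero => omega
  | succ n IH =>
    rcases Nat.lt_or_ge 1 (n+1) with h | h
    · have hn : 1 ≤ n := by omega
      rw [Finset.sum_Ico_succ_top hn, IH hn]
      ring
    · have : n = 0 := by omega
      subst this
      simp

lemma telescope (A : ℕ → ℤ) (m : ℕ) (hm : 1 ≤ m) :
    ∑ e ∈ Finset.Ico 1 (m+1), (A e - if e < m then A (e+1) else 0) = A 1 := by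
  rw [Finset.sum_Ico_succ_top hm]
  rw [if_neg (lt_irrefl m), sub_zero]
  have : ∀ e ∈ Finset.Ico 1 m, (A e - if e < m then A (e+1) else 0) = A e - A (e+1) := by
    intro e he
    rw [Finset.mem_Ico] at he
    rw [if_pos he.2]
  rw [Finset.sum_congr rfl this, tele2 A m hm]
  ring

variable {F : Type*} [Field F] [Fintype F] {r : ℕ} {p : Fin r → F}

lemma key (m : ℕ) (a : Fin r → ℕ)
    (hm1 : ∀ i, p i ≠ 0 → m ≤ a i) (hm2 : ∃ i, p i ≠ 0 ∧ a i = m) :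
    ((Cop F a p).card : ℤ) =
      (Fintype.card F : ℤ) ^ (∑ i, a i) -
        (if ∀ i, a i = 0 → p i = 0 then
          (Fintype.card F : ℤ) ^ (1 + ∑ i, (a i - 1)) else 0) := by
  induction m using Nat.strong_induction_on generalizing a with
  | _ m IH =>
  obtain ⟨i₁, hpi₁, hai₁⟩ := hm2
  have hrec := rec_identity (F := F) m hm1 ⟨i₁, hpi₁, hai₁⟩
  have hrecZ : (Fintype.card F : ℤ) ^ (∑ i, a i) =
      ∑ e ∈ Finset.range (m+1),
        (Fintype.card F : ℤ) ^ e * ((Cop F (fun i => a i - e) p).card : ℤ) := by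
    exact_mod_cast hrec
  have ha0 : (fun i => a i - 0) = a := funext fun i => Nat.sub_zero (a i)
  rw [Finset.range_eq_Ico, Finset.sum_eq_sum_Ico_succ_bot (by omega : 0 < m + 1)] at hrecZ
  rw [ha0, pow_zero, one_mul] at hrecZ
  rcases Nat.eq_zero_or_pos m with hm0 | hm0
  · subst hm0
    simp only [Finset.Ico_self, Finset.sum_empty, add_zero] at hrecZ
    have hcond : ¬ (∀ i, a i = 0 → p i = 0) := fun hc => hpi₁ (hc i₁ hai₁)
    rw [if_neg hcond, sub_zero, ← hrecZ]
  · -- m ≥ 1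
    set A : ℕ → ℤ := fun e => (Fintype.card F : ℤ) ^ (e + ∑ i, (a i - e)) with hA
    have hterm : ∀ e ∈ Finset.Ico 1 (m+1),
        (Fintype.card F : ℤ) ^ e * ((Cop F (fun i => a i - e) p).card : ℤ)
          = A e - if e < m then A (e+1) else 0 := by
      intro e he
      rw [Finset.mem_Ico] at he
      have hIH := IH (m - e) (by omega) (fun i => a i - e)
        (fun i hpi => by have := hm1 i hpi; show m - e ≤ a i - e; omega)
        ⟨i₁, hpi₁, by show a i₁ - e = m - e; omega⟩
      rw [hIH]
      have hcond : (∀ i, a i - e = 0 → p i = 0) ↔ e < m := by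
        constructor
        · intro hc
          by_contra hlt
          have he2 : e = m := by omega
          exact hpi₁ (hc i₁ (by omega))
        · intro hlt i hie
          by_contra hpi
          have := hm1 i hpi
          omega
      by_cases hlt : e < m
      · rw [if_pos (hcond.2 hlt), if_pos hlt]
        rw [mul_sub, hA]
        congr 1
        · rw [← pow_add]
        · rw [← pow_add]
          congr 1
          have hss : ∑ i, (a i - e - 1) = ∑ i, (a i - (e+1)) :=
            Finset.sum_congr rfl fun i _ => by omega
          rw [hss]
          omega
      · rw [if_neg fun hc => hlt (hcond.1 hc), if_neg hlt, sub_zero, sub_zero, hA,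
          ← pow_add]
    rw [Finset.sum_congr rfl hterm, telescope A m hm0] at hrecZ
    have hcond : (∀ i, a i = 0 → p i = 0) := by
      intro i hi
      by_contra hpi
      have := hm1 i hpi
      omega
    rw [if_pos hcond]
    have hA1 : A 1 = (Fintype.card F : ℤ) ^ (1 + ∑ i, (a i - 1)) := rfl
    rw [← hA1]
    linarith

end Stmt1

theorem stmt_1 (F : Type*) [Field F] [Fintype F] (q : ℕ) (hq : q = Fintype.card F)
    (r : ℕ) (hr : 1 ≤ r) (a : Fin r → ℕ) (ha : ∀ i, 1 ≤ a i)
    (d : ℕ) (hd : d = ∑ i, a i)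
    (p : Fin r → F) (hp : p ≠ 0) :
    Set.ncard {s : Fin r → F[X] |
        (∀ i, (s i).degree ≤ ((a i : ℕ) : WithBot ℕ)) ∧
        (∀ i, (s i).coeff (a i) = p i) ∧
        (∀ g : F[X], (∀ i, g ∣ s i) → IsUnit g)} =
      q ^ d - q ^ (d - r + 1) := by
  classical
  subst hq hd
  -- the set is the coercion of the finset Cop
  have hset : {s : Fin r → F[X] |
        (∀ i, (s i).degree ≤ ((a i : ℕ) : WithBot ℕ)) ∧
        (∀ i, (s i).coeff (a i) = p i) ∧
        (∀ g : F[X], (∀ i, g ∣ s i) → IsUnit g)} = ↑(Stmt1.Cop F a p) := by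
    ext s
    simp only [Set.mem_setOf_eq, Finset.coe_filter, Stmt1.Cop, Stmt1.mem_Box,
      Set.mem_setOf_eq, Finset.mem_coe, Finset.mem_filter, Stmt1.mem_Box]
    constructor
    · rintro ⟨h1, h2, h3⟩
      exact ⟨fun i => ⟨h1 i, h2 i⟩, h3⟩
    · rintro ⟨h1, h2⟩
      exact ⟨fun i => (h1 i).1, fun i => (h1 i).2, h2⟩
  rw [hset, Set.ncard_coe_finset]
  -- set up the minimum m
  obtain ⟨i₀, hi₀⟩ := Function.ne_iff.1 hp
  have hne : (Finset.univ.filter fun i => p i ≠ 0).Nonempty :=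
    ⟨i₀, Finset.mem_filter.2 ⟨Finset.mem_univ _, hi₀⟩⟩
  set m := (Finset.univ.filter fun i => p i ≠ 0).inf' hne a with hm
  have hm1 : ∀ i, p i ≠ 0 → m ≤ a i := fun i hpi =>
    Finset.inf'_le a (Finset.mem_filter.2 ⟨Finset.mem_univ _, hpi⟩)
  have hm2 : ∃ i, p i ≠ 0 ∧ a i = m := by
    obtain ⟨b, hb, hbeq⟩ := Finset.exists_mem_eq_inf' hne a
    exact ⟨b, (Finset.mem_filter.1 hb).2, hbeq.symm⟩
  have hkey := Stmt1.key m a hm1 hm2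
  have hcond : ∀ i, a i = 0 → p i = 0 := fun i hi => absurd hi (by have := ha i; omega)
  rw [if_pos hcond] at hkey
  -- arithmetic on exponents
  set d := ∑ i, a i with hd
  have hdr : r ≤ d := by
    calc r = ∑ _i : Fin r, 1 := by simp
      _ ≤ d := Finset.sum_le_sum fun i _ => ha i
  have hsum : ∑ i, (a i - 1) = d - r := by
    have h1 : ∑ i, (a i - 1) + r = d := by
      have : ∑ i, (a i - 1 + 1) = d := Finset.sum_congr rfl (fun i _ => by have := ha i; omega)
      rw [Finset.sum_add_distrib] at this
      simpa using this
    omega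
  rw [hsum] at hkey
  have hexp : 1 + (d - r) = d - r + 1 := by omega
  rw [hexp] at hkey
  have hle : Fintype.card F ^ (d - r + 1) ≤ Fintype.card F ^ d :=
    Nat.pow_le_pow_right Fintype.card_pos (by omega)
  have : ((Stmt1.Cop F a p).card : ℤ) = ((Fintype.card F ^ d - Fintype.card F ^ (d - r + 1) : ℕ) : ℤ) := by
    rw [Nat.cast_sub hle]
    push_cast
    exact hkey
  exact_mod_cast this
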